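/- Let X be a real Banach space with norm ‖·‖, q ≥ 2, C ≥ 1, and suppose there is an equivalent norm ⦀·⦀ on X with ‖x‖ ≤ ⦀x⦀ ≤ C‖x‖ for all x, satisfying ⦀(x+y)/2⦀^q ≤ (⦀x⦀^q + ⦀y⦀^q)/2 − ‖(x−y)/2‖^q for all x, y ∈ X. Then for every n ∈ ℕ with n ≥ 2 and all x₁,…,xₙ in the closed unit ball of (X, ‖·‖), there exist nonempty sets A, B ⊆ {1,…,n} with max A < min B such that ‖(1/|A|)∑_{i∈A} xᵢ − (1/|B|)∑_{j∈B} xⱼ‖ ≤ 2C/(⌊log₂ n⌋)^{1/q}. -/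

import Mathlib

open Finset

private lemma sum_range_two_mul' {β : Type*} [AddCommMonoid β] (M : ℕ) (f : ℕ → β) :
    ∑ i ∈ Finset.range (2 * M), f i = ∑ i ∈ Finset.range M, (f (2 * i) + f (2 * i + 1)) := by
  induction M with
  | zero => simp
  | succ M ih =>
    rw [Nat.mul_succ, show 2 * M + 2 = (2 * M + 1) + 1 from rfl,
      Finset.sum_range_succ, Finset.sum_range_succ, ih, Finset.sum_range_succ, add_assoc]

/-- Dyadic averaging sequence: `avgSeq x m i` is the average of `x` over the
block `[i * 2^m, (i+1) * 2^m)`. -/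
noncomputable def avgSeq {X : Type*} [AddCommGroup X] [Module ℝ X] (x : ℕ → X) : ℕ → ℕ → X :=
  fun m => Nat.rec x (fun _ zm i => (1 / 2 : ℝ) • (zm (2 * i) + zm (2 * i + 1))) m

lemma avgSeq_zero {X : Type*} [AddCommGroup X] [Module ℝ X] (x : ℕ → X) : avgSeq x 0 = x := rfl

lemma avgSeq_succ {X : Type*} [AddCommGroup X] [Module ℝ X] (x : ℕ → X) (m i : ℕ) :
    avgSeq x (m + 1) i = (1 / 2 : ℝ) • (avgSeq x m (2 * i) + avgSeq x m (2 * i + 1)) := rfl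

lemma avgSeq_eq {X : Type*} [AddCommGroup X] [Module ℝ X] (x : ℕ → X) (m : ℕ) :
    ∀ i, avgSeq x m i = ((2 : ℝ) ^ m)⁻¹ • ∑ j ∈ Finset.range (2 ^ m), x (i * 2 ^ m + j) := by
  induction m with
  | zero => intro i; simp [avgSeq_zero]
  | succ m ih =>
    intro i
    have e2 : (2 : ℕ) ^ (m + 1) = 2 ^ m + 2 ^ m := by ring
    have hsplit : ∑ j ∈ Finset.range (2 ^ (m + 1)), x (i * 2 ^ (m + 1) + j)
        = (∑ j ∈ Finset.range (2 ^ m), x ((2 * i) * 2 ^ m + j))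
          + ∑ j ∈ Finset.range (2 ^ m), x ((2 * i + 1) * 2 ^ m + j) := by
      rw [e2, Finset.sum_range_add]
      congr 1
      · refine Finset.sum_congr rfl fun j hj => ?_
        congr 1; ring
      · refine Finset.sum_congr rfl fun j hj => ?_
        congr 1; ring
    rw [avgSeq_succ, ih, ih, ← smul_add, smul_smul, hsplit]
    congr 1
    rw [pow_succ, mul_inv]
    ring

/-- Lemma 3.1 of the paper: difference of averages in a space with an
equivalent `q`-convex norm `T` (Pisier's renorming). -/
theorem stmt1
    (X : Type*) [NormedAddCommGroup X] [NormedSpace ℝ X] [CompleteSpace X]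
    (q : ℝ) (hq : 2 ≤ q) (C : ℝ) (hC : 1 ≤ C)
    (T : X → ℝ)
    (hT₁ : ∀ x : X, ‖x‖ ≤ T x ∧ T x ≤ C * ‖x‖)
    (hTconv : ∀ x y : X,
      T ((1 / 2 : ℝ) • (x + y)) ^ q ≤ (T x ^ q + T y ^ q) / 2 - ‖(1 / 2 : ℝ) • (x - y)‖ ^ q)
    (n : ℕ) (hn : 2 ≤ n) (x : Fin n → X) (hx : ∀ i, ‖x i‖ ≤ 1) :
    ∃ A B : Finset (Fin n), A.Nonempty ∧ B.Nonempty ∧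
      (∀ i ∈ A, ∀ j ∈ B, i < j) ∧
      ‖(A.card : ℝ)⁻¹ • ∑ i ∈ A, x i - (B.card : ℝ)⁻¹ • ∑ j ∈ B, x j‖ ≤
        2 * C / ((Nat.log 2 n : ℝ) ^ (1 / q)) := by
  have hq0 : (0 : ℝ) < q := lt_of_lt_of_le two_pos hq
  have hC0 : (0 : ℝ) < C := lt_of_lt_of_le one_pos hC
  have hT0 : ∀ y : X, 0 ≤ T y := fun y => le_trans (norm_nonneg y) (hT₁ y).1
  set k := Nat.log 2 n with hk
  have hk1 : 1 ≤ k := Nat.le_log_of_pow_le one_lt_two (by simpa using hn)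
  have hNn : 2 ^ k ≤ n := Nat.pow_log_le_self 2 (by omega)
  set x' : ℕ → X := fun j => if h : j < n then x ⟨j, h⟩ else 0 with hx'
  set z : ℕ → ℕ → X := avgSeq x' with hz
  set δ : ℝ := C ^ q / k with hδ
  have hkR : (0 : ℝ) < (k : ℝ) := by exact_mod_cast (by omega : 0 < k)
  -- main existence claim
  have main : ∃ m, m < k ∧ ∃ i, i < 2 ^ (k - m - 1) ∧
      ‖(1 / 2 : ℝ) • (z m (2 * i) - z m (2 * i + 1))‖ ^ q ≤ δ := by
    by_contra hcon
    push_neg at hcon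
    set S : ℕ → ℝ :=
      fun m => ((2 : ℝ) ^ (k - m))⁻¹ * ∑ i ∈ Finset.range (2 ^ (k - m)), T (z m i) ^ q with hS
    have hSnonneg : ∀ m, 0 ≤ S m := by
      intro m
      apply mul_nonneg (by positivity)
      exact Finset.sum_nonneg fun i _ => Real.rpow_nonneg (hT0 _) q
    have hS0 : S 0 ≤ C ^ q := by
      have hb : ∀ i ∈ Finset.range (2 ^ (k - 0)), T (z 0 i) ^ q ≤ C ^ q := by
        intro i hi
        rw [Finset.mem_range] at hi
        have hin : i < n := lt_of_lt_of_le hi (by simpa using hNn)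
        have hz0 : z 0 i = x ⟨i, hin⟩ := by
          simp only [hz, avgSeq_zero, hx']
          rw [dif_pos hin]
        have hTc : T (z 0 i) ≤ C := by
          rw [hz0]
          calc T (x ⟨i, hin⟩) ≤ C * ‖x ⟨i, hin⟩‖ := (hT₁ _).2
            _ ≤ C * 1 := by
                have := hx ⟨i, hin⟩
                nlinarith [norm_nonneg (x ⟨i, hin⟩)]
            _ = C := mul_one C
        exact Real.rpow_le_rpow (hT0 _) hTc (le_of_lt hq0)
      calc S 0 ≤ ((2 : ℝ) ^ (k - 0))⁻¹ * ∑ _i ∈ Finset.range (2 ^ (k - 0)), C ^ q :=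
            mul_le_mul_of_nonneg_left (Finset.sum_le_sum hb) (by positivity)
        _ = C ^ q := by
            rw [Finset.sum_const, Finset.card_range, nsmul_eq_mul]
            rw [show ((2 ^ (k - 0) : ℕ) : ℝ) = (2 : ℝ) ^ (k - 0) by push_cast; ring]
            field_simp
    have key : ∀ m, m < k → S (m + 1) < S m - δ := by
      intro m hm
      set M : ℕ := 2 ^ (k - m - 1) with hM
      have hM1 : 1 ≤ M := Nat.one_le_two_pow
      have hM0 : (M : ℝ) ≠ 0 := by positivity
      have h2M : 2 ^ (k - m) = 2 * M := by
        rw [hM, ← pow_succ']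
        congr 1
        omega
      have hpair : ∑ i ∈ Finset.range (2 ^ (k - m)), T (z m i) ^ q
          = ∑ i ∈ Finset.range M, (T (z m (2 * i)) ^ q + T (z m (2 * i + 1)) ^ q) := by
        rw [h2M]; exact sum_range_two_mul' M _
      have hterm : ∀ i ∈ Finset.range M,
          T (z (m + 1) i) ^ q
            < (T (z m (2 * i)) ^ q + T (z m (2 * i + 1)) ^ q) / 2 - δ := by
        intro i hi
        rw [Finset.mem_range] at hi
        have h1 : z (m + 1) i = (1 / 2 : ℝ) • (z m (2 * i) + z m (2 * i + 1)) := rfl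
        have h2 := hTconv (z m (2 * i)) (z m (2 * i + 1))
        rw [← h1] at h2
        have h3 := hcon m hm i hi
        linarith
      have hsum : ∑ i ∈ Finset.range M, T (z (m + 1) i) ^ q
          < ∑ i ∈ Finset.range M,
              ((T (z m (2 * i)) ^ q + T (z m (2 * i + 1)) ^ q) / 2 - δ) :=
        Finset.sum_lt_sum_of_nonempty (Finset.nonempty_range_iff.mpr (by omega)) hterm
      have hSm1 : S (m + 1) = (M : ℝ)⁻¹ * ∑ i ∈ Finset.range M, T (z (m + 1) i) ^ q := by
        have hkm : k - (m + 1) = k - m - 1 := by omega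
        simp only [hS, hkm, ← hM]
        rw [show ((M : ℕ) : ℝ) = (2 : ℝ) ^ (k - m - 1) by rw [hM]; push_cast; ring]
      have h2Mr : (2 : ℝ) ^ (k - m) = 2 * (M : ℝ) := by exact_mod_cast h2M
      calc S (m + 1) = (M : ℝ)⁻¹ * ∑ i ∈ Finset.range M, T (z (m + 1) i) ^ q := hSm1
        _ < (M : ℝ)⁻¹ * ∑ i ∈ Finset.range M,
              ((T (z m (2 * i)) ^ q + T (z m (2 * i + 1)) ^ q) / 2 - δ) := by
            exact mul_lt_mul_of_pos_left hsum (by positivity)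
        _ = S m - δ := by
            simp only [hS, hpair, Finset.sum_sub_distrib, Finset.sum_const,
              Finset.card_range, nsmul_eq_mul, h2Mr, ← Finset.sum_div]
            field_simp
    have chain : ∀ m, 1 ≤ m → m ≤ k → S m < S 0 - m * δ := by
      intro m hm1
      induction m, hm1 using Nat.le_induction with
      | base => intro _; have := key 0 (by omega); simpa using this
      | succ m hm ih =>
        intro hmk
        have h1 := key m (by omega)
        have h2 := ih (by omega)
        push_cast
        push_cast at h2
        linarith
    have hkδ : (k : ℝ) * δ = C ^ q := by
      rw [hδ]; field_simp
    have hfin := chain k hk1 le_rfl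
    have hSk := hSnonneg k
    linarith
  obtain ⟨m, hmk, i, hiM, hle⟩ := main
  -- the two blocks fit inside `n`
  have hub : (2 * i + 1 + 1) * 2 ^ m ≤ n := by
    have h1 : (2 * i + 1 + 1) * 2 ^ m = (i + 1) * 2 ^ (m + 1) := by ring
    have h2 : (i + 1) * 2 ^ (m + 1) ≤ 2 ^ (k - m - 1) * 2 ^ (m + 1) :=
      Nat.mul_le_mul_right _ (by omega)
    have h3 : 2 ^ (k - m - 1) * 2 ^ (m + 1) = 2 ^ k := by
      rw [← pow_add]; congr 1; omega
    omega
  have hmono : ∀ a b : ℕ, a ≤ b → a * 2 ^ m ≤ b * 2 ^ m := fun a b h =>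
    Nat.mul_le_mul_right _ h
  have hAbound : ∀ j ∈ Finset.Ico (2 * i * 2 ^ m) ((2 * i + 1) * 2 ^ m), j < n := by
    intro j hj
    rw [Finset.mem_Ico] at hj
    have := hmono (2 * i + 1) (2 * i + 1 + 1) (by omega)
    omega
  have hBbound : ∀ j ∈ Finset.Ico ((2 * i + 1) * 2 ^ m) ((2 * i + 1 + 1) * 2 ^ m), j < n := by
    intro j hj
    rw [Finset.mem_Ico] at hj
    omega
  -- the average over a block equals the dyadic average
  have havg : ∀ (l : ℕ) (hb : ∀ j ∈ Finset.Ico (l * 2 ^ m) ((l + 1) * 2 ^ m), j < n),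
      ((((Finset.Ico (l * 2 ^ m) ((l + 1) * 2 ^ m)).attachFin hb).card : ℝ))⁻¹ •
        ∑ j ∈ (Finset.Ico (l * 2 ^ m) ((l + 1) * 2 ^ m)).attachFin hb, x j = z m l := by
    intro l hb
    have hdiff : (l + 1) * 2 ^ m - l * 2 ^ m = 2 ^ m := by
      rw [← Nat.sub_mul, show l + 1 - l = 1 by omega, one_mul]
    have hsum : ∑ j ∈ (Finset.Ico (l * 2 ^ m) ((l + 1) * 2 ^ m)).attachFin hb, x j
        = ∑ a ∈ Finset.Ico (l * 2 ^ m) ((l + 1) * 2 ^ m), x' a := by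
      refine Finset.sum_bij (fun (a : Fin n) _ => (a : ℕ)) ?_ ?_ ?_ ?_
      · intro a ha; rwa [Finset.mem_attachFin] at ha
      · intro a _ b _ h; exact Fin.val_injective h
      · intro a ha; exact ⟨⟨a, hb a ha⟩, by rwa [Finset.mem_attachFin], rfl⟩
      · intro a ha; simp [hx', a.isLt]
    have hIco : ∑ a ∈ Finset.Ico (l * 2 ^ m) ((l + 1) * 2 ^ m), x' a
        = ∑ j ∈ Finset.range (2 ^ m), x' (l * 2 ^ m + j) := by
      rw [Finset.sum_Ico_eq_sum_range, hdiff]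
    have hcard : ((Finset.Ico (l * 2 ^ m) ((l + 1) * 2 ^ m)).attachFin hb).card = 2 ^ m := by
      rw [Finset.card_attachFin, Nat.card_Ico, hdiff]
    rw [hsum, hIco, hcard, hz, avgSeq_eq]
    norm_cast
  -- the norm bound
  have hw : ‖z m (2 * i) - z m (2 * i + 1)‖ ≤ 2 * C / (k : ℝ) ^ (1 / q) := by
    have h1 : ‖(1 / 2 : ℝ) • (z m (2 * i) - z m (2 * i + 1))‖
        = (1 / 2) * ‖z m (2 * i) - z m (2 * i + 1)‖ := by
      rw [norm_smul]; norm_num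
    rw [h1] at hle
    have hbpos : (0 : ℝ) < (k : ℝ) ^ (1 / q) := Real.rpow_pos_of_pos hkR _
    have hbq : (C / (k : ℝ) ^ (1 / q)) ^ q = δ := by
      rw [Real.div_rpow hC0.le hbpos.le, ← Real.rpow_mul hkR.le,
        one_div_mul_cancel (ne_of_gt hq0), Real.rpow_one, hδ]
    by_contra hcon2
    push_neg at hcon2
    have hlt : C / (k : ℝ) ^ (1 / q) < (1 / 2) * ‖z m (2 * i) - z m (2 * i + 1)‖ := by
      rw [div_lt_iff₀ hbpos] at hcon2 ⊢
      linarith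
    have := Real.rpow_lt_rpow (by positivity) hlt hq0
    rw [hbq] at this
    linarith
  refine ⟨(Finset.Ico (2 * i * 2 ^ m) ((2 * i + 1) * 2 ^ m)).attachFin hAbound,
    (Finset.Ico ((2 * i + 1) * 2 ^ m) ((2 * i + 1 + 1) * 2 ^ m)).attachFin hBbound,
    ?_, ?_, ?_, ?_⟩
  · apply Finset.card_pos.mp
    rw [Finset.card_attachFin, Nat.card_Ico, ← Nat.sub_mul, show 2 * i + 1 - 2 * i = 1 by omega,
      one_mul]
    exact Nat.one_le_two_pow
  · apply Finset.card_pos.mp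
    rw [Finset.card_attachFin, Nat.card_Ico, ← Nat.sub_mul,
      show 2 * i + 1 + 1 - (2 * i + 1) = 1 by omega, one_mul]
    exact Nat.one_le_two_pow
  · intro a ha b hb
    rw [Finset.mem_attachFin, Finset.mem_Ico] at ha hb
    exact Fin.lt_def.mpr (by omega)
  · rw [havg (2 * i) hAbound, havg (2 * i + 1) hBbound]
    exact hw
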